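/- arXiv:1708.05105 — 3 statements merged into one kernel-verified Lean document; each statement's English description precedes it below -/
import Mathlib

section
/- Let B be a finite set with an injective weight map wt : B → Λ (i.e. B is multiplicity-free: at most one element of each weight), and suppose (wt, e_i, f_i) and (wt, e'_i, f'_i) are two semi-normal crystal structures on B having the same weight map wt. Then e_i = e'_i and f_i = f'_i for every i ∈ I. Equivalently, any weight-preserving bijection from a multiplicity-free semi-normal crystal to a semi-normal crystal is an isomorphism of crystals. (In the paper the first crystal is assumed normal; every normal crystal is semi-normal and the proof uses only semi-normality.) -/
/-- `k`-fold iterate of a partially defined map `g : B → Option B` (with `g(0) = 0`). -/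
def iterOpt {B : Type*} (g : B → Option B) : ℕ → B → Option B
  | 0, b => some b
  | k + 1, b => (g b).bind (iterOpt g k)

/-- The length of the `g`-string through `b`: the largest `k` with `g^k(b) ≠ 0`.
(For the crystal operators of a finite crystal this set is bounded, so the
supremum is attained.) -/
noncomputable def stringLen {B : Type*} (g : B → Option B) (b : B) : ℕ :=
  sSup {k | iterOpt g k b ≠ none}

/-- A pre-crystal: a finite set `B` together with a weight map `wt : B → Λ` and partially
defined operators `e_i, f_i : B → B ⊔ {0}` for `i ∈ I`. -/
structure PreCrystal (I : Type*) (Λ : Type*) (B : Type*) where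
  wt : B → Λ
  e : I → B → Option B
  f : I → B → Option B

/-- The crystal axioms (1)–(4): `e_i` raises the weight by `α_i`, `f_i` lowers it by `α_i`,
and `e_i`, `f_i` are partially inverse bijections. -/
def PreCrystal.IsCrystal {I Λ B : Type*} [AddCommGroup Λ] (α : I → Λ)
    (K : PreCrystal I Λ B) : Prop :=
  (∀ i b b', K.e i b = some b' → K.wt b' = K.wt b + α i) ∧
  (∀ i b b', K.f i b = some b' → K.wt b' = K.wt b - α i) ∧
  (∀ i b b', K.e i b = some b' → K.f i b' = some b) ∧
  (∀ i b b', K.f i b = some b' → K.e i b' = some b)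

/-- `ε_i(b) = max{k : e_i^k(b) ≠ 0}`. -/
noncomputable def PreCrystal.eps {I Λ B : Type*} (K : PreCrystal I Λ B) (i : I) (b : B) : ℕ :=
  stringLen (K.e i) b

/-- `φ_i(b) = max{k : f_i^k(b) ≠ 0}`. -/
noncomputable def PreCrystal.phi {I Λ B : Type*} (K : PreCrystal I Λ B) (i : I) (b : B) : ℕ :=
  stringLen (K.f i) b

/-- Semi-normality: `φ_i(b) − ε_i(b) = ⟨α_i^∨, wt(b)⟩` for all `i`, `b`. -/
def PreCrystal.SemiNormal {I Λ B : Type*} [AddCommGroup Λ] (c : I → Λ →+ ℤ)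
    (K : PreCrystal I Λ B) : Prop :=
  ∀ i b, (K.phi i b : ℤ) - (K.eps i b : ℤ) = c i (K.wt b)

lemma stringLen_eq_zero {B : Type*} (g : B → Option B) (b : B) (h : g b = none) :
    stringLen g b = 0 := by
  have hs : {k | iterOpt g k b ≠ none} = {0} := by
    ext k
    cases k with
    | zero => simp [iterOpt]
    | succ n => simp [iterOpt, h]
  rw [stringLen, hs]
  exact csSup_singleton 0

/-- Key step: if `K'` is semi-normal, any `e`-edge of `K` is an `e`-edge of `K'`. -/
lemma aux_e_sub {I Λ B : Type*} [AddCommGroup Λ]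
    (α : I → Λ) (c : I → Λ →+ ℤ) (hc : ∀ i, c i (α i) = 2)
    (K K' : PreCrystal I Λ B)
    (hwt : K.wt = K'.wt) (hinj : Function.Injective K.wt)
    (hK : K.IsCrystal α) (hK' : K'.IsCrystal α)
    (hsn' : K'.SemiNormal c)
    (i : I) (b b₁ : B) (hb : K.e i b = some b₁) : K'.e i b = some b₁ := by
  obtain ⟨he, hf, hef, hfe⟩ := hK
  obtain ⟨he', hf', hef', hfe'⟩ := hK'
  have w1 : K.wt b₁ = K.wt b + α i := he i b b₁ hb
  cases h' : K'.e i b with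
  | some b₁' =>
    have w2 : K'.wt b₁' = K'.wt b + α i := he' i b b₁' h'
    have : K.wt b₁ = K.wt b₁' := by rw [w1, hwt, w2, ← hwt]
    rw [hinj this]
  | none =>
    exfalso
    have heps : K'.eps i b = 0 := stringLen_eq_zero _ _ h'
    have hsb : (K'.phi i b : ℤ) - (K'.eps i b : ℤ) = c i (K'.wt b) := hsn' i b
    have hsb1 : (K'.phi i b₁ : ℤ) - (K'.eps i b₁ : ℤ) = c i (K'.wt b₁) := hsn' i b₁
    have wb1 : K'.wt b₁ = K'.wt b + α i := by rw [← hwt, w1, hwt]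
    have hcb : (0:ℤ) ≤ c i (K'.wt b) := by
      rw [← hsb, heps]
      simp
    have hcb1 : c i (K'.wt b₁) = c i (K'.wt b) + 2 := by
      rw [wb1, map_add, hc]
    have hphi1 : K'.phi i b₁ ≠ 0 := by
      intro h0
      rw [h0] at hsb1
      omega
    cases hfb1 : K'.f i b₁ with
    | none => exact hphi1 (stringLen_eq_zero _ _ hfb1)
    | some x =>
      have wx : K'.wt x = K'.wt b₁ - α i := hf' i b₁ x hfb1
      have : K.wt x = K.wt b := by
        rw [hwt, wx, wb1]
        abel
      have hx : x = b := hinj this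
      rw [hx] at hfb1
      rw [hfe' i b₁ b hfb1] at h'
      exact Option.some_ne_none _ h'

/-- A multiplicity-free semi-normal crystal structure is determined by its weight map:
if two semi-normal crystal structures on a finite set `B` share the same injective weight
map, then their crystal operators coincide. Equivalently, a weight-preserving bijection
from a multiplicity-free semi-normal crystal to a semi-normal crystal is an isomorphism
of crystals. -/
theorem multiplicityFree_semiNormal_unique
    {I Λ B : Type*} [Fintype I] [AddCommGroup Λ] [Fintype B]
    (α : I → Λ) (c : I → Λ →+ ℤ) (hc : ∀ i, c i (α i) = 2)
    (K K' : PreCrystal I Λ B)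
    (hwt : K.wt = K'.wt) (hinj : Function.Injective K.wt)
    (hK : K.IsCrystal α) (hK' : K'.IsCrystal α)
    (hsn : K.SemiNormal c) (hsn' : K'.SemiNormal c) :
    K.e = K'.e ∧ K.f = K'.f := by
  have hinj' : Function.Injective K'.wt := hwt ▸ hinj
  have he_eq : K.e = K'.e := by
    funext i b
    cases hb : K.e i b with
    | some b₁ => exact (aux_e_sub α c hc K K' hwt hinj hK hK' hsn' i b b₁ hb).symm
    | none =>
      cases hb' : K'.e i b with
      | some b₁ =>
        have := aux_e_sub α c hc K' K hwt.symm hinj' hK' hK hsn i b b₁ hb'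
        rw [this] at hb
        exact absurd hb (Option.some_ne_none _)
      | none => rfl
  refine ⟨he_eq, ?_⟩
  obtain ⟨he, hf, hef, hfe⟩ := hK
  obtain ⟨he', hf', hef', hfe'⟩ := hK'
  funext i b
  cases hb : K.f i b with
  | some b₁ =>
    have h1 : K.e i b₁ = some b := hfe i b b₁ hb
    rw [he_eq] at h1
    exact (hef' i b₁ b h1).symm
  | none =>
    cases hb' : K'.f i b with
    | some b₁ =>
      have h1 : K'.e i b₁ = some b := hfe' i b b₁ hb'
      rw [← he_eq] at h1
      rw [hef i b₁ b h1] at hb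
      exact absurd hb (Option.some_ne_none _)
    | none => rfl
end

section
/- For any two crystals B₁ and B₂, the tensor product B₁ ⊗ B₂ is again a crystal: the maps wt, e_i, f_i defined by the tensor product rule satisfy the crystal axioms (1)–(4). Moreover, if B₁ and B₂ are semi-normal crystals, then B₁ ⊗ B₂ is a semi-normal crystal. -/
/-- The tensor product of two pre-crystals: the underlying set is `B₁ × B₂`,
`wt(b₁, b₂) = wt(b₁) + wt(b₂)`, and the operators are given by the tensor product rule
(any pair with a `0` entry being `0`). -/
noncomputable def PreCrystal.tensor {I Λ B₁ B₂ : Type*} [AddCommGroup Λ]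
    (K₁ : PreCrystal I Λ B₁) (K₂ : PreCrystal I Λ B₂) : PreCrystal I Λ (B₁ × B₂) where
  wt := fun p => K₁.wt p.1 + K₂.wt p.2
  e := fun i p =>
    if K₁.eps i p.1 > K₂.phi i p.2 then (K₁.e i p.1).map (fun b => (b, p.2))
    else (K₂.e i p.2).map (fun b => (p.1, b))
  f := fun i p =>
    if K₁.eps i p.1 ≥ K₂.phi i p.2 then (K₁.f i p.1).map (fun b => (b, p.2))
    else (K₂.f i p.2).map (fun b => (p.1, b))



set_option linter.unusedSectionVars false
section Aux

variable {B : Type*}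

lemma iterOpt_zero (g : B → Option B) (b : B) : iterOpt g 0 b = some b := rfl

lemma iterOpt_succ (g : B → Option B) (k : ℕ) (b : B) :
    iterOpt g (k + 1) b = (g b).bind (iterOpt g k) := rfl

lemma iterOpt_one (g : B → Option B) (b : B) : iterOpt g 1 b = g b := by
  rw [iterOpt_succ]; cases g b <;> rfl

lemma iterOpt_add (g : B → Option B) (j k : ℕ) (b : B) :
    iterOpt g (j + k) b = (iterOpt g j b).bind (iterOpt g k) := by
  induction j generalizing b with
  | zero => simp [iterOpt]
  | succ j ih =>
    rw [show j + 1 + k = (j + k) + 1 from by omega, iterOpt_succ, iterOpt_succ]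
    cases g b with
    | none => rfl
    | some x => simp [ih]

lemma iterOpt_ne_none_mono (g : B → Option B) {j k : ℕ} {b : B} (hjk : j ≤ k)
    (h : iterOpt g k b ≠ none) : iterOpt g j b ≠ none := by
  obtain ⟨m, rfl⟩ := Nat.exists_eq_add_of_le hjk
  rw [iterOpt_add] at h
  intro hn
  rw [hn] at h
  exact h rfl

lemma stringLen_of_none {g : B → Option B} {b : B} (hg : g b = none) : stringLen g b = 0 := by
  have : {k | iterOpt g k b ≠ none} = {0} := by
    ext k
    constructor
    · intro hk
      by_contra h0
      obtain ⟨m, rfl⟩ := Nat.exists_eq_succ_of_ne_zero h0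
      simp only [Set.mem_setOf_eq, iterOpt_succ, hg] at hk
      exact hk rfl
    · rintro rfl
      simp [iterOpt]
  rw [stringLen, this, csSup_singleton]

variable [Fintype B]

lemma iter_weight {g : B → Option B} {w : B → ℤ} (hw : ∀ x y, g x = some y → w y = w x + 2)
    {k : ℕ} {b b' : B} (h : iterOpt g k b = some b') : w b' = w b + 2 * k := by
  induction k generalizing b with
  | zero =>
    rw [iterOpt_zero] at h
    injection h with h
    subst h
    ring
  | succ k ih =>
    rw [iterOpt_succ] at h
    cases hg : g b with
    | none => rw [hg] at h; simp at h
    | some x =>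
      rw [hg] at h
      rw [Option.bind_some] at h
      have := ih h
      rw [this, hw b x hg]
      push_cast
      ring

lemma bddAbove_iter {g : B → Option B} {w : B → ℤ}
    (hw : ∀ x y, g x = some y → w y = w x + 2) (b : B) :
    BddAbove {k | iterOpt g k b ≠ none} := by
  classical
  refine ⟨Finset.univ.sup fun x => (w x).natAbs, fun k hk => ?_⟩
  simp only [Set.mem_setOf_eq] at hk
  obtain ⟨b', hb'⟩ := Option.ne_none_iff_exists'.mp hk
  have h1 := iter_weight hw hb'
  have h2 : (w b').natAbs ≤ Finset.univ.sup fun x => (w x).natAbs :=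
    Finset.le_sup (f := fun x => (w x).natAbs) (Finset.mem_univ b')
  have h3 : (w b).natAbs ≤ Finset.univ.sup fun x => (w x).natAbs :=
    Finset.le_sup (f := fun x => (w x).natAbs) (Finset.mem_univ b)
  omega

lemma ne_none_iff_le_stringLen {g : B → Option B} {w : B → ℤ}
    (hw : ∀ x y, g x = some y → w y = w x + 2) (b : B) (k : ℕ) :
    iterOpt g k b ≠ none ↔ k ≤ stringLen g b := by
  constructor
  · intro hk
    exact le_csSup (bddAbove_iter hw b) hk
  · intro hk
    have hmem : stringLen g b ∈ {k | iterOpt g k b ≠ none} := by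
      apply Nat.sSup_mem ⟨0, by simp [iterOpt]⟩ (bddAbove_iter hw b)
    exact iterOpt_ne_none_mono g hk hmem

lemma stringLen_succ_of_some {g : B → Option B} {w : B → ℤ}
    (hw : ∀ x y, g x = some y → w y = w x + 2) {b b' : B} (hb : g b = some b') :
    stringLen g b = stringLen g b' + 1 := by
  have key : ∀ k, iterOpt g (k + 1) b = iterOpt g k b' := by
    intro k; rw [iterOpt_succ, hb]; rfl
  apply le_antisymm
  · have h1 : iterOpt g (stringLen g b) b ≠ none :=
      (ne_none_iff_le_stringLen hw b _).mpr le_rfl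
    cases hsb : stringLen g b with
    | zero => omega
    | succ m =>
      rw [hsb, key m] at h1
      have := (ne_none_iff_le_stringLen hw b' m).mp h1
      omega
  · have h1 : iterOpt g (stringLen g b') b' ≠ none :=
      (ne_none_iff_le_stringLen hw b' _).mpr le_rfl
    rw [← key] at h1
    exact (ne_none_iff_le_stringLen hw b _).mp h1

lemma one_le_stringLen_of_some {g : B → Option B} {w : B → ℤ}
    (hw : ∀ x y, g x = some y → w y = w x + 2) {b b' : B} (hb : g b = some b') :
    1 ≤ stringLen g b := by
  rw [stringLen_succ_of_some hw hb]; omega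

lemma exists_some_of_one_le_stringLen {g : B → Option B} {w : B → ℤ}
    (hw : ∀ x y, g x = some y → w y = w x + 2) {b : B} (hb : 1 ≤ stringLen g b) :
    ∃ b', g b = some b' := by
  have := (ne_none_iff_le_stringLen hw b 1).mpr hb
  rw [iterOpt_one] at this
  exact Option.ne_none_iff_exists'.mp this

end Aux

section Crystal
variable {I Λ B : Type*} [AddCommGroup Λ] [Fintype B]
variable {α : I → Λ} {c : I → Λ →+ ℤ}
variable {K : PreCrystal I Λ B}

lemma hwE (h : K.IsCrystal α) (hc : ∀ i, c i (α i) = 2) (i : I) :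
    ∀ x y, K.e i x = some y → (c i (K.wt y)) = (c i (K.wt x)) + 2 := by
  intro x y hxy
  rw [h.1 i x y hxy, map_add, hc i]

lemma hwF (h : K.IsCrystal α) (hc : ∀ i, c i (α i) = 2) (i : I) :
    ∀ x y, K.f i x = some y → (-(c i (K.wt y))) = (-(c i (K.wt x))) + 2 := by
  intro x y hxy
  rw [h.2.1 i x y hxy, map_sub, hc i]
  ring

lemma eps_of_e (h : K.IsCrystal α) (hc : ∀ i, c i (α i) = 2) {i : I} {b b' : B}
    (hb : K.e i b = some b') : K.eps i b = K.eps i b' + 1 :=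
  stringLen_succ_of_some (hwE h hc i) hb

lemma phi_of_f (h : K.IsCrystal α) (hc : ∀ i, c i (α i) = 2) {i : I} {b b' : B}
    (hb : K.f i b = some b') : K.phi i b = K.phi i b' + 1 :=
  stringLen_succ_of_some (hwF h hc i) hb

lemma phi_of_e (h : K.IsCrystal α) (hc : ∀ i, c i (α i) = 2) {i : I} {b b' : B}
    (hb : K.e i b = some b') : K.phi i b' = K.phi i b + 1 :=
  phi_of_f h hc (h.2.2.1 i b b' hb)

lemma eps_of_f (h : K.IsCrystal α) (hc : ∀ i, c i (α i) = 2) {i : I} {b b' : B}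
    (hb : K.f i b = some b') : K.eps i b' = K.eps i b + 1 :=
  eps_of_e h hc (h.2.2.2 i b b' hb)

lemma eps_pos_of_e (h : K.IsCrystal α) (hc : ∀ i, c i (α i) = 2) {i : I} {b : B}
    (hb : 1 ≤ K.eps i b) : ∃ b', K.e i b = some b' :=
  exists_some_of_one_le_stringLen (hwE h hc i) hb

lemma phi_pos_of_f (h : K.IsCrystal α) (hc : ∀ i, c i (α i) = 2) {i : I} {b : B}
    (hb : 1 ≤ K.phi i b) : ∃ b', K.f i b = some b' :=
  exists_some_of_one_le_stringLen (hwF h hc i) hb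

lemma eps_eq_zero_of_none {i : I} {b : B} (hb : K.e i b = none) : K.eps i b = 0 :=
  stringLen_of_none hb

lemma phi_eq_zero_of_none {i : I} {b : B} (hb : K.f i b = none) : K.phi i b = 0 :=
  stringLen_of_none hb

end Crystal

section Tensor
variable {I Λ B₁ B₂ : Type*} [AddCommGroup Λ] [Fintype B₁] [Fintype B₂]
variable {α : I → Λ} {c : I → Λ →+ ℤ}
variable {K₁ : PreCrystal I Λ B₁} {K₂ : PreCrystal I Λ B₂}

lemma tensor_isCrystal (hc : ∀ i, c i (α i) = 2)
    (h₁ : K₁.IsCrystal α) (h₂ : K₂.IsCrystal α) : (K₁.tensor K₂).IsCrystal α := by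
  refine ⟨?_, ?_, ?_, ?_⟩
  · rintro i ⟨x, y⟩ p' he
    simp only [PreCrystal.tensor] at he ⊢
    split_ifs at he with hcond
    · obtain ⟨a, ha, ha2⟩ := Option.map_eq_some_iff.mp he
      subst ha2
      rw [h₁.1 i x a ha]
      abel
    · obtain ⟨a, ha, ha2⟩ := Option.map_eq_some_iff.mp he
      subst ha2
      rw [h₂.1 i y a ha]
      abel
  · rintro i ⟨x, y⟩ p' hf
    simp only [PreCrystal.tensor] at hf ⊢
    split_ifs at hf with hcond
    · obtain ⟨a, ha, ha2⟩ := Option.map_eq_some_iff.mp hf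
      subst ha2
      rw [h₁.2.1 i x a ha]
      abel
    · obtain ⟨a, ha, ha2⟩ := Option.map_eq_some_iff.mp hf
      subst ha2
      rw [h₂.2.1 i y a ha]
      abel
  · rintro i ⟨x, y⟩ p' he
    simp only [PreCrystal.tensor] at he ⊢
    split_ifs at he with hcond
    · obtain ⟨a, ha, ha2⟩ := Option.map_eq_some_iff.mp he
      subst ha2
      have hepsa : K₁.eps i x = K₁.eps i a + 1 := eps_of_e h₁ hc ha
      rw [if_pos (by omega : K₂.phi i y ≤ K₁.eps i a), h₁.2.2.1 i x a ha]
      rfl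
    · push_neg at hcond
      obtain ⟨a, ha, ha2⟩ := Option.map_eq_some_iff.mp he
      subst ha2
      have hphia : K₂.phi i a = K₂.phi i y + 1 := phi_of_e h₂ hc ha
      rw [if_neg (by omega : ¬ K₂.phi i a ≤ K₁.eps i x), h₂.2.2.1 i y a ha]
      rfl
  · rintro i ⟨x, y⟩ p' hf
    simp only [PreCrystal.tensor] at hf ⊢
    split_ifs at hf with hcond
    · obtain ⟨a, ha, ha2⟩ := Option.map_eq_some_iff.mp hf
      subst ha2
      have hepsa : K₁.eps i a = K₁.eps i x + 1 := eps_of_f h₁ hc ha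
      rw [if_pos (by omega : K₂.phi i y < K₁.eps i a), h₁.2.2.2 i x a ha]
      rfl
    · push_neg at hcond
      obtain ⟨a, ha, ha2⟩ := Option.map_eq_some_iff.mp hf
      subst ha2
      have hphia : K₂.phi i y = K₂.phi i a + 1 := phi_of_f h₂ hc ha
      rw [if_neg (by omega : ¬ K₂.phi i a < K₁.eps i x), h₂.2.2.2 i y a ha]
      rfl

lemma e_none_of_eps_zero {I Λ B : Type*} [AddCommGroup Λ] [Fintype B]
    {α : I → Λ} {c : I → Λ →+ ℤ} {K : PreCrystal I Λ B}
    (h : K.IsCrystal α) (hc : ∀ i, c i (α i) = 2) {i : I} {b : B}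
    (hb : K.eps i b = 0) : K.e i b = none := by
  cases he : K.e i b with
  | none => rfl
  | some b' => have := eps_of_e h hc he; omega

lemma f_none_of_phi_zero {I Λ B : Type*} [AddCommGroup Λ] [Fintype B]
    {α : I → Λ} {c : I → Λ →+ ℤ} {K : PreCrystal I Λ B}
    (h : K.IsCrystal α) (hc : ∀ i, c i (α i) = 2) {i : I} {b : B}
    (hb : K.phi i b = 0) : K.f i b = none := by
  cases hf : K.f i b with
  | none => rfl
  | some b' => have := phi_of_f h hc hf; omega

lemma tensor_eps (hc : ∀ i, c i (α i) = 2)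
    (h₁ : K₁.IsCrystal α) (h₂ : K₂.IsCrystal α) (i : I) :
    ∀ (n : ℕ) (x : B₁) (y : B₂), K₁.eps i x + K₂.eps i y = n →
      (K₁.tensor K₂).eps i (x, y) = K₂.eps i y + (K₁.eps i x - K₂.phi i y) := by
  have hT := tensor_isCrystal hc h₁ h₂
  intro n
  induction n using Nat.strong_induction_on with
  | _ n ih =>
    intro x y hn
    by_cases hgt : K₂.phi i y < K₁.eps i x
    · obtain ⟨x', hx'⟩ := eps_pos_of_e h₁ hc (i := i) (b := x) (by omega)
      have hstep : (K₁.tensor K₂).e i (x, y) = some (x', y) := by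
        simp only [PreCrystal.tensor]
        rw [if_pos hgt, hx']
        rfl
      have hT1 := eps_of_e hT hc hstep
      have he1 := eps_of_e h₁ hc hx'
      have hp1 := phi_of_e h₁ hc hx'
      have hrec := ih (K₁.eps i x' + K₂.eps i y) (by omega) x' y rfl
      omega
    · push_neg at hgt
      rcases Nat.eq_zero_or_pos (K₂.eps i y) with h0 | hpos
      · have hnone : (K₁.tensor K₂).e i (x, y) = none := by
          simp only [PreCrystal.tensor]
          rw [if_neg (by omega), e_none_of_eps_zero h₂ hc h0]
          rfl
        have := eps_eq_zero_of_none (K := K₁.tensor K₂) hnone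
        omega
      · obtain ⟨y', hy'⟩ := eps_pos_of_e h₂ hc (i := i) (b := y) hpos
        have hstep : (K₁.tensor K₂).e i (x, y) = some (x, y') := by
          simp only [PreCrystal.tensor]
          rw [if_neg (by omega), hy']
          rfl
        have hT1 := eps_of_e hT hc hstep
        have he2 := eps_of_e h₂ hc hy'
        have hp2 := phi_of_e h₂ hc hy'
        have hrec := ih (K₁.eps i x + K₂.eps i y') (by omega) x y' rfl
        omega

lemma tensor_phi (hc : ∀ i, c i (α i) = 2)
    (h₁ : K₁.IsCrystal α) (h₂ : K₂.IsCrystal α) (i : I) :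
    ∀ (n : ℕ) (x : B₁) (y : B₂), K₁.phi i x + K₂.phi i y = n →
      (K₁.tensor K₂).phi i (x, y) = K₁.phi i x + (K₂.phi i y - K₁.eps i x) := by
  have hT := tensor_isCrystal hc h₁ h₂
  intro n
  induction n using Nat.strong_induction_on with
  | _ n ih =>
    intro x y hn
    by_cases hge : K₂.phi i y ≤ K₁.eps i x
    · rcases Nat.eq_zero_or_pos (K₁.phi i x) with h0 | hpos
      · have hnone : (K₁.tensor K₂).f i (x, y) = none := by
          simp only [PreCrystal.tensor]
          rw [if_pos hge, f_none_of_phi_zero h₁ hc h0]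
          rfl
        have := phi_eq_zero_of_none (K := K₁.tensor K₂) hnone
        omega
      · obtain ⟨x', hx'⟩ := phi_pos_of_f h₁ hc (i := i) (b := x) hpos
        have hstep : (K₁.tensor K₂).f i (x, y) = some (x', y) := by
          simp only [PreCrystal.tensor]
          rw [if_pos hge, hx']
          rfl
        have hT1 := phi_of_f hT hc hstep
        have hp1 := phi_of_f h₁ hc hx'
        have he1 := eps_of_f h₁ hc hx'
        have hrec := ih (K₁.phi i x' + K₂.phi i y) (by omega) x' y rfl
        omega
    · push_neg at hge
      obtain ⟨y', hy'⟩ := phi_pos_of_f h₂ hc (i := i) (b := y) (by omega)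
      have hstep : (K₁.tensor K₂).f i (x, y) = some (x, y') := by
        simp only [PreCrystal.tensor]
        rw [if_neg (by omega), hy']
        rfl
      have hT1 := phi_of_f hT hc hstep
      have hp2 := phi_of_f h₂ hc hy'
      have he2 := eps_of_f h₂ hc hy'
      have hrec := ih (K₁.phi i x + K₂.phi i y') (by omega) x y' rfl
      omega

end Tensor

/-- The tensor product of two crystals is again a crystal, and the tensor product of two
semi-normal crystals is semi-normal. -/
theorem tensor_isCrystal_and_semiNormal
    {I Λ B₁ B₂ : Type*} [Fintype I] [AddCommGroup Λ] [Fintype B₁] [Fintype B₂]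
    (α : I → Λ) (c : I → Λ →+ ℤ) (hc : ∀ i, c i (α i) = 2)
    (K₁ : PreCrystal I Λ B₁) (K₂ : PreCrystal I Λ B₂)
    (h₁ : K₁.IsCrystal α) (h₂ : K₂.IsCrystal α) :
    (K₁.tensor K₂).IsCrystal α ∧
      (K₁.SemiNormal c → K₂.SemiNormal c → (K₁.tensor K₂).SemiNormal c) := by
  refine ⟨tensor_isCrystal hc h₁ h₂, ?_⟩
  intro s₁ s₂ i p
  obtain ⟨x, y⟩ := p
  rw [tensor_eps hc h₁ h₂ i _ x y rfl, tensor_phi hc h₁ h₂ i _ x y rfl]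
  have hwt : (K₁.tensor K₂).wt (x, y) = K₁.wt x + K₂.wt y := rfl
  rw [hwt, map_add, ← s₁ i x, ← s₂ i y]
  push_cast
  omega
end

section
/- Let L be a finite-dimensional semisimple Lie algebra over ℂ, (x_a) a basis of L and (x^a) the dual basis with respect to the Killing form κ (i.e. κ(x_a, x^b) = δ_a^b). Fix n ≥ 2 and work in the universal enveloping algebra U(L^{⊕n}) of the direct sum of n copies of L; for y ∈ L and 1 ≤ i ≤ n let y^{(i)} ∈ U(L^{⊕n}) denote the image of y placed in the i-th summand, and set Ω^{(ij)} = Σ_a x_a^{(i)} · (x^a)^{(j)} for i ≠ j. Let z_1,…,z_n be pairwise distinct complex numbers and let χ ∈ L. Define the Gaudin Hamiltonians H_i = Σ_{j ≠ i} (z_i − z_j)^{-1} Ω^{(ij)} + χ^{(i)} ∈ U(L^{⊕n}) for i = 1,…,n. Then the H_i pairwise commute: H_i H_j = H_j H_i for all i, j. (In the paper χ is a real regular Cartan element and this follows from the fact that the H_i lie in the commutative inhomogeneous Gaudin algebra A_χ(z₁,…,z_n); the commutativity holds for arbitrary χ ∈ L.) -/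
open UniversalEnvelopingAlgebra

variable {L : Type*} [LieRing L] [LieAlgebra ℂ L]

/-- The image `y^{(i)}` in `U(L^{⊕n})` of `y ∈ L` placed in the `i`-th summand
(the direct sum of `n` copies of `L` is realized as `⨁ _ : Fin n, L`). -/
noncomputable def inSummand (n : ℕ) (i : Fin n) (y : L) :
    UniversalEnvelopingAlgebra ℂ (DirectSum (Fin n) fun _ => L) :=
  ι ℂ (DirectSum.lieAlgebraOf ℂ (Fin n) (fun _ => L) i y)

/-- The split Casimir element `Ω^{(ij)} = Σ_a x_a^{(i)} (x^a)^{(j)} ∈ U(L^{⊕n})` attached to a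
basis `(x_a)` of `L` and its Killing-dual family `(x^a)`, placed in the `i`-th and `j`-th
factors. -/
noncomputable def splitCasimirIJ (n : ℕ) {ιB : Type*} [Fintype ιB]
    (bas : Module.Basis ιB ℂ L) (dbas : ιB → L) (i j : Fin n) :
    UniversalEnvelopingAlgebra ℂ (DirectSum (Fin n) fun _ => L) :=
  ∑ a : ιB, inSummand n i (bas a) * inSummand n j (dbas a)

/-- The Gaudin Hamiltonian `H_i = Σ_{j ≠ i} (z_i − z_j)⁻¹ Ω^{(ij)} + χ^{(i)} ∈ U(L^{⊕n})`. -/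
noncomputable def gaudinHamiltonian (n : ℕ) {ιB : Type*} [Fintype ιB]
    (bas : Module.Basis ιB ℂ L) (dbas : ιB → L) (z : Fin n → ℂ) (χ : L) (i : Fin n) :
    UniversalEnvelopingAlgebra ℂ (DirectSum (Fin n) fun _ => L) :=
  (∑ j ∈ Finset.univ.erase i, (z i - z j)⁻¹ • splitCasimirIJ n bas dbas i j) +
    inSummand n i χ

/-! ### Auxiliary lemmas -/

attribute [local instance] LieRing.ofAssociativeRing

section Aux

lemma ring_lie_mul' {A : Type*} [Ring A] (a b c : A) :
    ⁅a, b * c⁆ = ⁅a, b⁆ * c + b * ⁅a, c⁆ := by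
  simp only [Ring.lie_def]; noncomm_ring

lemma ring_mul_lie' {A : Type*} [Ring A] (a b c : A) :
    ⁅a * b, c⁆ = a * ⁅b, c⁆ + ⁅a, c⁆ * b := by
  simp only [Ring.lie_def]; noncomm_ring

lemma sum_lie' {A α : Type*} [Ring A] (s : Finset α) (f : α → A) (y : A) :
    ⁅∑ x ∈ s, f x, y⁆ = ∑ x ∈ s, ⁅f x, y⁆ := by
  simp only [Ring.lie_def, Finset.sum_mul, Finset.mul_sum, Finset.sum_sub_distrib]

lemma lie_sum' {A α : Type*} [Ring A] (s : Finset α) (f : α → A) (y : A) :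
    ⁅y, ∑ x ∈ s, f x⁆ = ∑ x ∈ s, ⁅y, f x⁆ := by
  simp only [Ring.lie_def, Finset.sum_mul, Finset.mul_sum, Finset.sum_sub_distrib]

variable {n : ℕ}

/-- `inSummand` as a linear map. -/
noncomputable def inSummandL (n : ℕ) (i : Fin n) :
    L →ₗ[ℂ] UniversalEnvelopingAlgebra ℂ (DirectSum (Fin n) fun _ => L) :=
  ((ι ℂ : (DirectSum (Fin n) fun _ => L) →ₗ⁅ℂ⁆
      UniversalEnvelopingAlgebra ℂ (DirectSum (Fin n) fun _ => L)) :
      (DirectSum (Fin n) fun _ => L) →ₗ[ℂ] _).comp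
    ((DirectSum.lieAlgebraOf ℂ (Fin n) (fun _ => L) i :
        L →ₗ⁅ℂ⁆ (DirectSum (Fin n) fun _ => L)) : L →ₗ[ℂ] _)

lemma inSummand_eq_L (i : Fin n) (y : L) : inSummand n i y = inSummandL n i y := rfl

lemma inSummand_lie (i : Fin n) (y w : L) :
    ⁅inSummand n i y, inSummand n i w⁆ = inSummand n i ⁅y, w⁆ := by
  simp only [inSummand, ← LieHom.map_lie]

lemma inSummand_lie_ne {i j : Fin n} (h : i ≠ j) (y w : L) :
    ⁅inSummand n i y, inSummand n j w⁆ = 0 := by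
  simp only [inSummand, ← LieHom.map_lie, DirectSum.lieAlgebraOf_apply]
  rw [DirectSum.lie_of_of_ne _ h, map_zero]

section WithBasis

variable {ιB : Type*} [Fintype ιB] [DecidableEq ιB]
variable (bas : Module.Basis ιB ℂ L) (dbas : ιB → L)

/-- Expansion of any vector in the basis `bas` with Killing-pairing coefficients. -/
lemma expand1
    (hdual : ∀ a b : ιB, killingForm ℂ L (bas a) (dbas b) = if a = b then 1 else 0)
    (v : L) :
    ∑ a : ιB, killingForm ℂ L v (dbas a) • bas a = v := by
  have key : ∀ a : ιB, (killingForm ℂ L).flip (dbas a) = bas.coord a := by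
    intro a
    apply bas.ext
    intro b
    simp [LinearMap.flip_apply, hdual, Module.Basis.coord_apply, Module.Basis.repr_self,
      Finsupp.single_apply, eq_comm]
  conv_rhs => rw [← bas.sum_repr v]
  refine Finset.sum_congr rfl fun a _ => ?_
  congr 1
  have := congrFun (congrArg (fun f : L →ₗ[ℂ] ℂ => (f : L → ℂ)) (key a)) v
  simpa [LinearMap.flip_apply, Module.Basis.coord_apply] using this

/-- Expansion of any vector in the dual family `dbas` with Killing-pairing coefficients. -/
lemma expand2 [Module.Finite ℂ L] [Nonempty ιB]
    (hdual : ∀ a b : ιB, killingForm ℂ L (bas a) (dbas b) = if a = b then 1 else 0)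
    (v : L) :
    ∑ a : ιB, killingForm ℂ L (bas a) v • dbas a = v := by
  have hli : LinearIndependent ℂ dbas := by
    rw [Fintype.linearIndependent_iff]
    intro g hg b
    have h := congrArg (killingForm ℂ L (bas b)) hg
    simp only [map_sum, map_smul, hdual, smul_eq_mul, map_zero, mul_ite, mul_one, mul_zero,
      Finset.sum_ite_eq, Finset.sum_ite_eq', Finset.mem_univ, if_true] at h
    exact h
  have hcard : Fintype.card ιB = Module.finrank ℂ L :=
    (Module.finrank_eq_card_basis bas).symm
  let dB : Module.Basis ιB ℂ L := basisOfLinearIndependentOfCardEqFinrank hli hcard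
  have hdB : ∀ a, dB a = dbas a := fun a =>
    congrFun (coe_basisOfLinearIndependentOfCardEqFinrank hli hcard) a
  have key : ∀ a : ιB, killingForm ℂ L (bas a) = dB.coord a := by
    intro a
    apply dB.ext
    intro b
    rw [hdB b, hdual, Module.Basis.coord_apply, ← hdB b, Module.Basis.repr_self, Finsupp.single_apply]
    exact if_congr eq_comm rfl rfl
  conv_rhs => rw [← dB.sum_repr v]
  refine Finset.sum_congr rfl fun a _ => ?_
  rw [hdB]
  congr 1
  have := congrFun (congrArg (fun f : L →ₗ[ℂ] ℂ => (f : L → ℂ)) (key a)) v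
  simpa [Module.Basis.coord_apply] using this

variable [Module.Finite ℂ L] [Nonempty ιB]

/-- Invariance of the split Casimir: `⁅y^{(i)}, Ω^{(ij)}⁆ + ⁅y^{(j)}, Ω^{(ij)}⁆ = 0`. -/
lemma invariance
    (hdual : ∀ a b : ιB, killingForm ℂ L (bas a) (dbas b) = if a = b then 1 else 0)
    {i j : Fin n} (hij : i ≠ j) (y : L) :
    ⁅inSummand n i y, splitCasimirIJ n bas dbas i j⁆
      + ⁅inSummand n j y, splitCasimirIJ n bas dbas i j⁆ = 0 := by
  have hc : ∀ a b : ιB,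
      killingForm ℂ L ⁅y, bas b⁆ (dbas a) + killingForm ℂ L (bas b) ⁅y, dbas a⁆ = 0 := by
    intro a b
    rw [← LieModule.traceForm_apply_lie_apply, ← lie_skew y (bas b), map_neg,
      LinearMap.neg_apply]
    abel
  simp only [splitCasimirIJ, lie_sum', ring_lie_mul', inSummand_lie,
    inSummand_lie_ne hij, inSummand_lie_ne hij.symm, mul_zero, zero_mul, add_zero, zero_add]
  -- goal : ∑ a, inSummand n i ⁅y, bas a⁆ * inSummand n j (dbas a)
  --      + ∑ a, inSummand n i (bas a) * inSummand n j ⁅y, dbas a⁆ = 0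
  have h1 : ∀ a : ιB, inSummand n i ⁅y, bas a⁆ * inSummand n j (dbas a)
      = ∑ b : ιB, killingForm ℂ L ⁅y, bas a⁆ (dbas b) •
          (inSummand n i (bas b) * inSummand n j (dbas a)) := by
    intro a
    conv_lhs => rw [← expand1 bas dbas hdual ⁅y, bas a⁆]
    simp only [inSummand_eq_L, map_sum, map_smul, Finset.sum_mul, smul_mul_assoc]
  have h2 : ∀ a : ιB, inSummand n i (bas a) * inSummand n j ⁅y, dbas a⁆
      = ∑ b : ιB, killingForm ℂ L (bas b) ⁅y, dbas a⁆ •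
          (inSummand n i (bas a) * inSummand n j (dbas b)) := by
    intro a
    conv_lhs => rw [← expand2 bas dbas hdual ⁅y, dbas a⁆]
    simp only [inSummand_eq_L, map_sum, map_smul, Finset.mul_sum, mul_smul_comm]
  simp only [h1, h2]
  rw [Finset.sum_comm (f := fun a b => killingForm ℂ L ⁅y, bas a⁆ (dbas b) •
    (inSummand n i (bas b) * inSummand n j (dbas a))), ← Finset.sum_add_distrib]
  refine Finset.sum_eq_zero fun a _ => ?_
  rw [← Finset.sum_add_distrib]
  refine Finset.sum_eq_zero fun b _ => ?_
  rw [← add_smul, hc a b, zero_smul]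

/-- Symmetry of the split Casimir: `Ω^{(ij)} = Ω^{(ji)}`. -/
lemma casimir_symm
    (hdual : ∀ a b : ιB, killingForm ℂ L (bas a) (dbas b) = if a = b then 1 else 0)
    {i j : Fin n} (hij : i ≠ j) :
    splitCasimirIJ n bas dbas i j = splitCasimirIJ n bas dbas j i := by
  have hcomm : ∀ (a : ιB), inSummand n j (bas a) * inSummand n i (dbas a)
      = inSummand n i (dbas a) * inSummand n j (bas a) :=
    fun a => (commute_iff_lie_eq.mpr (inSummand_lie_ne hij.symm _ _)).eq
  have h1 : ∀ a : ιB, inSummand n i (bas a) * inSummand n j (dbas a)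
      = ∑ b : ιB, killingForm ℂ L (bas b) (bas a) •
          (inSummand n i (dbas b) * inSummand n j (dbas a)) := by
    intro a
    conv_lhs => rw [show bas a = ∑ b : ιB, killingForm ℂ L (bas b) (bas a) • dbas b from
      (expand2 bas dbas hdual (bas a)).symm]
    simp only [inSummand_eq_L, map_sum, map_smul, Finset.sum_mul, smul_mul_assoc]
  have h2 : ∀ a : ιB, inSummand n j (bas a) * inSummand n i (dbas a)
      = ∑ b : ιB, killingForm ℂ L (bas b) (bas a) •
          (inSummand n i (dbas a) * inSummand n j (dbas b)) := by
    intro a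
    rw [hcomm a]
    conv_lhs => rw [show bas a = ∑ b : ιB, killingForm ℂ L (bas b) (bas a) • dbas b from
      (expand2 bas dbas hdual (bas a)).symm]
    simp only [inSummand_eq_L, map_sum, map_smul, Finset.mul_sum, mul_smul_comm]
  simp only [splitCasimirIJ, h1, h2]
  rw [Finset.sum_comm]
  refine Finset.sum_congr rfl fun a _ => Finset.sum_congr rfl fun b _ => ?_
  rw [LieModule.traceForm_comm]

/-- A factor in a third summand commutes (in Lie-bracket form) with `Ω^{(ij)}`. -/
lemma lie_casimir_other {i j k : Fin n} (hki : k ≠ i) (hkj : k ≠ j) (y : L) :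
    ⁅inSummand n k y, splitCasimirIJ n bas dbas i j⁆ = 0 := by
  simp only [splitCasimirIJ, lie_sum', ring_lie_mul', inSummand_lie_ne hki,
    inSummand_lie_ne hkj, mul_zero, zero_mul, add_zero, Finset.sum_const_zero]

lemma casimir_lie_other {i j k : Fin n} (hki : k ≠ i) (hkj : k ≠ j) (y : L) :
    ⁅splitCasimirIJ n bas dbas i j, inSummand n k y⁆ = 0 := by
  rw [← neg_eq_zero, ← lie_skew, lie_casimir_other bas dbas hki hkj]
  simp

/-- Key relation: `⁅Ω^{(ik)}, Ω^{(ij)}⁆ + ⁅Ω^{(jk)}, Ω^{(ij)}⁆ = 0` for distinct `i, j, k`. -/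
lemma casimir_add_lie
    (hdual : ∀ a b : ιB, killingForm ℂ L (bas a) (dbas b) = if a = b then 1 else 0)
    {i j k : Fin n} (hij : i ≠ j) (hik : i ≠ k) (hjk : j ≠ k) :
    ⁅splitCasimirIJ n bas dbas i k, splitCasimirIJ n bas dbas i j⁆
      + ⁅splitCasimirIJ n bas dbas j k, splitCasimirIJ n bas dbas i j⁆ = 0 := by
  rw [show splitCasimirIJ n bas dbas i k
        = ∑ a : ιB, inSummand n i (bas a) * inSummand n k (dbas a) from rfl,
    show splitCasimirIJ n bas dbas j k
        = ∑ a : ιB, inSummand n j (bas a) * inSummand n k (dbas a) from rfl,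
    sum_lie', sum_lie', ← Finset.sum_add_distrib]
  refine Finset.sum_eq_zero fun a _ => ?_
  rw [ring_mul_lie', ring_mul_lie', lie_casimir_other bas dbas hik.symm hjk.symm,
    mul_zero, zero_add, mul_zero, zero_add, ← add_mul,
    invariance bas dbas hdual hij, zero_mul]

/-- Split Casimirs on disjoint pairs of indices commute. -/
lemma casimir_lie_casimir_disjoint {i k j l : Fin n}
    (h1 : i ≠ j) (h2 : i ≠ l) (h3 : k ≠ j) (h4 : k ≠ l) :
    ⁅splitCasimirIJ n bas dbas i k, splitCasimirIJ n bas dbas j l⁆ = 0 := by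
  rw [show splitCasimirIJ n bas dbas i k
        = ∑ a : ιB, inSummand n i (bas a) * inSummand n k (dbas a) from rfl, sum_lie']
  refine Finset.sum_eq_zero fun a _ => ?_
  rw [ring_mul_lie', lie_casimir_other bas dbas h3 h4, lie_casimir_other bas dbas h1 h2,
    mul_zero, zero_mul, add_zero]

end WithBasis

end Aux

/-- Let `L` be a finite-dimensional semisimple complex Lie algebra, `(x_a)` a basis of `L`
and `(x^a)` the dual basis with respect to the Killing form, `z_1, …, z_n` pairwise distinct
complex numbers and `χ ∈ L`.  Then the Gaudin Hamiltonians
`H_i = Σ_{j ≠ i} (z_i − z_j)⁻¹ Ω^{(ij)} + χ^{(i)}` pairwise commute in `U(L^{⊕n})`. -/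
theorem gaudinHamiltonians_commute
    [Module.Finite ℂ L] [LieAlgebra.IsSemisimple ℂ L]
    (n : ℕ) (hn : 2 ≤ n)
    {ιB : Type*} [Fintype ιB] [DecidableEq ιB]
    (bas : Module.Basis ιB ℂ L) (dbas : ιB → L)
    (hdual : ∀ a b : ιB, killingForm ℂ L (bas a) (dbas b) = if a = b then 1 else 0)
    (z : Fin n → ℂ) (hz : Function.Injective z) (χ : L) :
    ∀ i j : Fin n,
      Commute (gaudinHamiltonian n bas dbas z χ i) (gaudinHamiltonian n bas dbas z χ j) := by
  intro i j
  rcases eq_or_ne i j with rfl | hij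
  · exact Commute.refl _
  rw [commute_iff_lie_eq]
  rcases isEmpty_or_nonempty ιB with hE | hNE
  · simp only [gaudinHamiltonian, splitCasimirIJ, Finset.univ_eq_empty, Finset.sum_empty,
      smul_zero, Finset.sum_const_zero, zero_add]
    exact inSummand_lie_ne hij χ χ
  have hzne : ∀ {p q : Fin n}, p ≠ q → z p - z q ≠ 0 :=
    fun h => sub_ne_zero.mpr fun hq => h (hz hq)
  have hji : j ≠ i := hij.symm
  have hmemj : j ∈ Finset.univ.erase i := Finset.mem_erase.mpr ⟨hji, Finset.mem_univ j⟩
  have hmemi : i ∈ Finset.univ.erase j := Finset.mem_erase.mpr ⟨hij, Finset.mem_univ i⟩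
  -- the set of "other" indices
  set s : Finset (Fin n) := (Finset.univ.erase i).erase j with hs
  have hsymm : splitCasimirIJ n bas dbas j i = splitCasimirIJ n bas dbas i j := (casimir_symm bas dbas hdual hji)
  have hcji : (z j - z i)⁻¹ = -(z i - z j)⁻¹ := by rw [← neg_sub, inv_neg]
  rw [gaudinHamiltonian, gaudinHamiltonian]
  rw [← Finset.add_sum_erase _ _ hmemj, ← Finset.add_sum_erase _ _ hmemi,
    Finset.erase_right_comm (a := j) (b := i), ← hs]
  have hks : ∀ k ∈ s, k ≠ i ∧ k ≠ j := fun k hk =>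
    ⟨(Finset.mem_erase.mp (Finset.mem_erase.mp hk).2).1, (Finset.mem_erase.mp hk).1⟩
  -- the χ–χ term
  have hT9 : ⁅inSummand n i χ, inSummand n j χ⁆ = 0 := inSummand_lie_ne hij χ χ
  -- the diagonal Casimir term
  have hT1 : ⁅(z i - z j)⁻¹ • splitCasimirIJ n bas dbas i j, (z j - z i)⁻¹ • splitCasimirIJ n bas dbas j i⁆ = 0 := by
    rw [hsymm, lie_smul, smul_lie, lie_self, smul_zero, smul_zero]
  -- Casimir terms against χ in a third slot
  have hT6 : ⁅∑ x ∈ s, (z i - z x)⁻¹ • splitCasimirIJ n bas dbas i x, inSummand n j χ⁆ = 0 := by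
    rw [sum_lie']
    refine Finset.sum_eq_zero fun k hk => ?_
    rw [smul_lie, casimir_lie_other bas dbas hji (hks k hk).2.symm, smul_zero]
  have hT8 : ⁅inSummand n i χ, ∑ x ∈ s, (z j - z x)⁻¹ • splitCasimirIJ n bas dbas j x⁆ = 0 := by
    rw [lie_sum']
    refine Finset.sum_eq_zero fun k hk => ?_
    rw [lie_smul, lie_casimir_other bas dbas hij (hks k hk).1.symm, smul_zero]
  -- the two χ cross terms cancel
  have hinvχ := invariance bas dbas hdual hij χ
  have hChi : ⁅(z i - z j)⁻¹ • splitCasimirIJ n bas dbas i j, inSummand n j χ⁆ + ⁅inSummand n i χ, (z j - z i)⁻¹ • splitCasimirIJ n bas dbas j i⁆ = 0 := by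
    rw [hsymm, hcji, smul_lie, lie_smul, ← lie_skew (splitCasimirIJ n bas dbas i j) (inSummand n j χ), smul_neg, neg_smul,
      ← neg_add, neg_eq_zero, ← smul_add, add_comm ⁅inSummand n j χ, splitCasimirIJ n bas dbas i j⁆, hinvχ, smul_zero]
  -- the three quadratic terms cancel
  have hT2 : ⁅(z i - z j)⁻¹ • splitCasimirIJ n bas dbas i j, ∑ x ∈ s, (z j - z x)⁻¹ • splitCasimirIJ n bas dbas j x⁆
      = ∑ k ∈ s, ((z i - z j)⁻¹ * (z j - z k)⁻¹) • ⁅splitCasimirIJ n bas dbas i j, splitCasimirIJ n bas dbas j k⁆ := by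
    rw [lie_sum']
    exact Finset.sum_congr rfl fun k _ => by rw [smul_lie, lie_smul, smul_smul]
  have hT4 : ⁅∑ x ∈ s, (z i - z x)⁻¹ • splitCasimirIJ n bas dbas i x, (z j - z i)⁻¹ • splitCasimirIJ n bas dbas j i⁆
      = ∑ k ∈ s, ((z i - z k)⁻¹ * (z j - z i)⁻¹) • ⁅splitCasimirIJ n bas dbas i k, splitCasimirIJ n bas dbas i j⁆ := by
    rw [sum_lie']
    exact Finset.sum_congr rfl fun k _ => by rw [hsymm, smul_lie, lie_smul, smul_smul]
  have hT5 : ⁅∑ x ∈ s, (z i - z x)⁻¹ • splitCasimirIJ n bas dbas i x, ∑ x ∈ s, (z j - z x)⁻¹ • splitCasimirIJ n bas dbas j x⁆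
      = ∑ k ∈ s, ((z i - z k)⁻¹ * (z j - z k)⁻¹) • ⁅splitCasimirIJ n bas dbas i k, splitCasimirIJ n bas dbas j k⁆ := by
    rw [sum_lie']
    refine Finset.sum_congr rfl fun k hk => ?_
    rw [lie_sum', Finset.sum_eq_single_of_mem k hk]
    · rw [smul_lie, lie_smul, smul_smul]
    · intro x hx hxk
      rw [smul_lie, lie_smul,
        casimir_lie_casimir_disjoint bas dbas hij (hks x hx).1.symm (hks k hk).2 hxk.symm,
        smul_zero, smul_zero]
  have hQuad : ⁅(z i - z j)⁻¹ • splitCasimirIJ n bas dbas i j, ∑ x ∈ s, (z j - z x)⁻¹ • splitCasimirIJ n bas dbas j x⁆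
      + ⁅∑ x ∈ s, (z i - z x)⁻¹ • splitCasimirIJ n bas dbas i x, (z j - z i)⁻¹ • splitCasimirIJ n bas dbas j i⁆
      + ⁅∑ x ∈ s, (z i - z x)⁻¹ • splitCasimirIJ n bas dbas i x, ∑ x ∈ s, (z j - z x)⁻¹ • splitCasimirIJ n bas dbas j x⁆ = 0 := by
    rw [hT2, hT4, hT5, ← Finset.sum_add_distrib, ← Finset.sum_add_distrib]
    refine Finset.sum_eq_zero fun k hk => ?_
    obtain ⟨hki, hkj⟩ := hks k hk
    have hik : i ≠ k := hki.symm
    have hjk : j ≠ k := hkj.symm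
    have hA := casimir_add_lie bas dbas hdual hij hik hjk
    have hB := casimir_add_lie bas dbas hdual hik hij hkj
    rw [casimir_symm bas dbas hdual hkj] at hB
    have h1 : ⁅splitCasimirIJ n bas dbas i j, splitCasimirIJ n bas dbas j k⁆ = ⁅splitCasimirIJ n bas dbas i k, splitCasimirIJ n bas dbas i j⁆ := by
      rw [← lie_skew (splitCasimirIJ n bas dbas i j) (splitCasimirIJ n bas dbas j k)]
      exact neg_eq_of_add_eq_zero_left hA
    have h2 : ⁅splitCasimirIJ n bas dbas i k, splitCasimirIJ n bas dbas j k⁆ = -⁅splitCasimirIJ n bas dbas i k, splitCasimirIJ n bas dbas i j⁆ := by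
      rw [← lie_skew (splitCasimirIJ n bas dbas i k) (splitCasimirIJ n bas dbas j k), neg_eq_of_add_eq_zero_left hB,
        lie_skew (splitCasimirIJ n bas dbas i j) (splitCasimirIJ n bas dbas i k)]
    have hscal : (z i - z j)⁻¹ * (z j - z k)⁻¹ + (z i - z k)⁻¹ * (z j - z i)⁻¹
        + -((z i - z k)⁻¹ * (z j - z k)⁻¹) = 0 := by
      have d1 := hzne hij
      have d2 := hzne hjk
      have d3 := hzne hik
      have d4 := hzne hji
      field_simp
      ring
    rw [h1, h2, smul_neg, ← neg_smul, ← add_smul, ← add_smul, hscal, zero_smul]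
  -- assemble
  have hT3' : ⁅(z i - z j)⁻¹ • splitCasimirIJ n bas dbas i j, inSummand n j χ⁆ = -⁅inSummand n i χ, (z j - z i)⁻¹ • splitCasimirIJ n bas dbas j i⁆ :=
    eq_neg_of_add_eq_zero_left hChi
  have hT5' : ⁅∑ x ∈ s, (z i - z x)⁻¹ • splitCasimirIJ n bas dbas i x, ∑ x ∈ s, (z j - z x)⁻¹ • splitCasimirIJ n bas dbas j x⁆
      = -(⁅(z i - z j)⁻¹ • splitCasimirIJ n bas dbas i j, ∑ x ∈ s, (z j - z x)⁻¹ • splitCasimirIJ n bas dbas j x⁆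
          + ⁅∑ x ∈ s, (z i - z x)⁻¹ • splitCasimirIJ n bas dbas i x, (z j - z i)⁻¹ • splitCasimirIJ n bas dbas j i⁆) :=
    eq_neg_of_add_eq_zero_right hQuad
  simp only [add_lie, lie_add, hT1, hT6, hT8, hT9, hT3', hT5', add_zero, zero_add]
  abel
end
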